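/- Let E be a finite-dimensional real inner product space, let f : E → ℝ be differentiable with gradient ∇f, and suppose ∇f is Lipschitz with constant L > 0. Let P : E → E be a self-adjoint positive semidefinite continuous linear operator with operator norm ‖P‖ ≤ 1/L. Then for every v ∈ E, f(v − P(∇f(v))) ≤ f(v) − (1/2)·⟨∇f(v), P(∇f(v))⟩. -/

import Mathlib

open RealInnerProductSpace

private lemma descent_aux {E : Type*} [NormedAddCommGroup E] [InnerProductSpace ℝ E]
    [FiniteDimensional ℝ E]
    (f : E → ℝ) (hf : Differentiable ℝ f)
    (L : ℝ) (hL : 0 < L)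
    (hlip : LipschitzWith (Real.toNNReal L) (fun v => gradient f v))
    (v u : E) :
    f (v + u) ≤ f v + ⟪gradient f v, u⟫ + L / 2 * ‖u‖ ^ 2 := by
  set g := gradient f v with hg
  have hd : ∀ t : ℝ, HasDerivAt (fun t : ℝ => f (v + t • u))
      ⟪gradient f (v + t • u), u⟫ t := by
    intro t
    have h1 : HasDerivAt (fun t : ℝ => v + t • u) u t := by
      simpa using ((hasDerivAt_id t).smul_const u).const_add v
    have h2 := (hf (v + t • u)).hasGradientAt.hasFDerivAt
    have := h2.comp_hasDerivAt t h1
    simpa [InnerProductSpace.toDual_apply_apply, Function.comp_def] using this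
  set φ : ℝ → ℝ := fun t => f (v + t • u) - t * ⟪g, u⟫ - L / 2 * ‖u‖ ^ 2 * t ^ 2 with hφ
  have hφd : ∀ t : ℝ, HasDerivAt φ
      (⟪gradient f (v + t • u), u⟫ - ⟪g, u⟫ - L * ‖u‖ ^ 2 * t) t := by
    intro t
    have h1 : HasDerivAt (fun t : ℝ => t * ⟪g, u⟫) ⟪g, u⟫ t := by
      simpa using (hasDerivAt_id t).mul_const (⟪g, u⟫ : ℝ)
    have h2 : HasDerivAt (fun t : ℝ => L / 2 * ‖u‖ ^ 2 * t ^ 2)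
        (L * ‖u‖ ^ 2 * t) t := by
      have := (hasDerivAt_pow 2 t).const_mul (L / 2 * ‖u‖ ^ 2)
      exact this.congr_deriv (by ring)
    exact ((hd t).sub h1).sub h2
  have hanti : AntitoneOn φ (Set.Icc 0 1) := by
    apply antitoneOn_of_deriv_nonpos (convex_Icc (0:ℝ) 1)
    · exact fun t _ => ((hφd t).continuousAt).continuousWithinAt
    · intro t _
      exact ((hφd t).differentiableAt).differentiableWithinAt
    · intro t ht
      rw [interior_Icc] at ht
      rw [(hφd t).deriv]
      have hbound : ⟪gradient f (v + t • u) - g, u⟫ ≤ L * ‖u‖ ^ 2 * t := by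
        calc ⟪gradient f (v + t • u) - g, u⟫ ≤ ‖gradient f (v + t • u) - g‖ * ‖u‖ :=
              real_inner_le_norm _ _
          _ ≤ (L * ‖t • u‖) * ‖u‖ := by
              apply mul_le_mul_of_nonneg_right _ (norm_nonneg u)
              have := hlip.dist_le_mul (v + t • u) v
              simpa [dist_eq_norm, hg, Real.coe_toNNReal L hL.le] using this
          _ = L * ‖u‖ ^ 2 * t := by
              rw [norm_smul, Real.norm_eq_abs, abs_of_pos ht.1]
              ring
      have : ⟪gradient f (v + t • u) - g, u⟫ = ⟪gradient f (v + t • u), u⟫ - ⟪g, u⟫ :=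
        inner_sub_left _ _ _
      linarith [hbound, this.symm.le]
  have h01 : φ 1 ≤ φ 0 := hanti (by simp) (by simp) zero_le_one
  simp only [hφ, one_smul, zero_smul, add_zero, one_pow, zero_pow, mul_zero, mul_one,
    sub_zero, zero_mul] at h01
  linarith

/-- Preconditioned descent lemma: if `f` has an `L`-Lipschitz gradient and `P` is a
self-adjoint positive semidefinite continuous linear operator with `‖P‖ ≤ 1/L`, then
`f (v - P (∇f v)) ≤ f v - (1/2) ⟪∇f v, P (∇f v)⟫`. -/
theorem stmt0 {E : Type*} [NormedAddCommGroup E] [InnerProductSpace ℝ E]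
    [FiniteDimensional ℝ E]
    (f : E → ℝ) (hf : Differentiable ℝ f)
    (L : ℝ) (hL : 0 < L)
    (hlip : LipschitzWith (Real.toNNReal L) (fun v => gradient f v))
    (P : E →L[ℝ] E)
    (hsa : ∀ u w : E, ⟪P u, w⟫ = ⟪u, P w⟫)
    (hpsd : ∀ u : E, 0 ≤ ⟪u, P u⟫)
    (hnorm : ‖P‖ ≤ 1 / L) :
    ∀ v : E, f (v - P (gradient f v)) ≤ f v - (1 / 2) * ⟪gradient f v, P (gradient f v)⟫ := by
  intro v
  set g := gradient f v with hg
  have key := descent_aux f hf L hL hlip v (-(P g))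
  have hvu : v + -(P g) = v - P g := by abel
  rw [hvu] at key
  have hinner : ⟪g, -(P g)⟫ = -⟪g, P g⟫ := inner_neg_right _ _
  have hnormneg : ‖-(P g)‖ = ‖P g‖ := norm_neg _
  rw [hinner, hnormneg] at key
  -- Cauchy–Schwarz for the semidefinite form  ⟪x, P y⟫
  set n : ℝ := ‖P g‖ ^ 2 with hn
  set c : ℝ := ⟪g, P g⟫ with hc
  have hc0 : 0 ≤ c := hpsd g
  have hLn : L / 2 * n ≤ 1 / 2 * c := by
    rcases eq_or_lt_of_le (sq_nonneg ‖P g‖) with h0 | hpos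
    · rw [hn, ← h0]
      simpa using (by linarith : (0:ℝ) ≤ 1 / 2 * c)
    · -- n > 0
      set a : ℝ := ⟪P g, P (P g)⟫ with ha
      have hq : ∀ t : ℝ, 0 ≤ a * (t * t) + (2 * n) * t + c := by
        intro t
        have := hpsd (g + t • P g)
        have hexp : ⟪g + t • P g, P (g + t • P g)⟫ = a * (t * t) + (2 * n) * t + c := by
          have hPmap : P (g + t • P g) = P g + t • P (P g) := by
            rw [map_add, map_smul]
          have h1 : (⟪g, P (P g)⟫ : ℝ) = ‖P g‖ ^ 2 := by
            rw [← hsa g (P g), real_inner_self_eq_norm_sq]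
          simp only [hPmap, inner_add_left, inner_add_right, real_inner_smul_left,
            real_inner_smul_right, h1, real_inner_self_eq_norm_sq, ha, hn, hc]
          ring
        rw [hexp] at this
        exact this
      have hdisc := discrim_le_zero hq
      rw [discrim] at hdisc
      -- (2n)^2 - 4 a c ≤ 0  ⇒  n^2 ≤ a c
      have hn2 : n ^ 2 ≤ a * c := by nlinarith
      have haub : a ≤ n / L := by
        have h1 : a ≤ ‖P g‖ * ‖P (P g)‖ := real_inner_le_norm _ _
        have h2 : ‖P (P g)‖ ≤ ‖P‖ * ‖P g‖ := P.le_opNorm _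
        have h3 : ‖P‖ * ‖P g‖ ≤ (1 / L) * ‖P g‖ :=
          mul_le_mul_of_nonneg_right hnorm (norm_nonneg _)
        calc a ≤ ‖P g‖ * ‖P (P g)‖ := h1
          _ ≤ ‖P g‖ * (‖P‖ * ‖P g‖) := by nlinarith [norm_nonneg (P g), h2]
          _ ≤ ‖P g‖ * ((1 / L) * ‖P g‖) := by nlinarith [norm_nonneg (P g), h3]
          _ = n / L := by rw [hn]; field_simp
      have hLa : L * a ≤ n := by
        have := mul_le_mul_of_nonneg_left haub hL.le
        rw [mul_div_cancel₀ _ (ne_of_gt hL)] at this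
        linarith
      have hL' : L * n ≤ c := by
        nlinarith [mul_le_mul_of_nonneg_left hn2 hL.le,
          mul_le_mul_of_nonneg_right hLa hc0, hpos]
      linarith
  linarith
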